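/- arXiv:1502.05254 — 3 statements merged into one kernel-verified Lean document; each statement's English description precedes it below -/
import Mathlib

section
/- C¹ functions with values in a uniformly open nc set form a uniformly open nc set. Let 𝒳 be a real operator space, Γ ⊆ 𝒳_nc a uniformly open nc set, s ∈ ℕ, and [a, b] ⊂ ℝ a compact interval. For r ∈ ℕ, let Y_* : [a, b] → 𝒳^{sr×sr} be a continuously differentiable function with Y_*(t) ∈ Γ_{sr} for all t ∈ [a, b]. Then there exists μ > 0 such that for every m ∈ ℕ and every continuously differentiable function Y : [a, b] → 𝒳^{srm×srm} with max{ sup_{t∈[a,b]} ‖Y(t) − Y_*^{(m)}(t)‖_{srm}, sup_{t∈[a,b]} ‖Ẏ(t) − Ẏ_*^{(m)}(t)‖_{srm} } < μ, one has Y(t) ∈ Γ_{srm} for all t ∈ [a, b]. Consequently, the set of all continuously differentiable functions (over all levels m) with values in Γ is a uniformly open nc set in C¹([a, b], 𝒳^{s×s})_nc with the level-m norms ‖Y‖ = max{sup_t ‖Y(t)‖, sup_t ‖Ẏ(t)‖}. -/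
/-! ## Core definitions for free nc functions over operator spaces.

Level-`n` elements of the nc space over `V` are `n×n` matrices over `V`. -/

/-- The `(2,2)` operator norm of a scalar matrix. -/
noncomputable def scalarOpNorm {𝕜 : Type*} [RCLike 𝕜] {n : ℕ}
    (S : Matrix (Fin n) (Fin n) 𝕜) : ℝ :=
  ‖Matrix.toEuclideanCLM (𝕜 := 𝕜) S‖

/-- The direct sum `X ⊕ Y` of square matrices. -/
def dirSumM {V : Type*} [Zero V] {n m : ℕ} (X : Matrix (Fin n) (Fin n) V)
    (Y : Matrix (Fin m) (Fin m) V) : Matrix (Fin (n + m)) (Fin (n + m)) V :=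
  Matrix.reindex finSumFinEquiv finSumFinEquiv (Matrix.fromBlocks X 0 0 Y)

/-- The `m`-fold block-diagonal amplification `Y^{(m)} = I_m ⊗ Y` of `Y ∈ V^{s×s}`. -/
def amplify {V : Type*} [Zero V] {s : ℕ} (m : ℕ) (Y : Matrix (Fin s) (Fin s) V) :
    Matrix (Fin (s * m)) (Fin (s * m)) V :=
  Matrix.of fun i j =>
    if (finProdFinEquiv.symm i).2 = (finProdFinEquiv.symm j).2 then
      Y (finProdFinEquiv.symm i).1 (finProdFinEquiv.symm j).1
    else 0

/-- Left multiplication of a matrix over `V` by a scalar matrix. -/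
def smulLs (𝕜 : Type*) [Semiring 𝕜] {V : Type*} [AddCommMonoid V] [Module 𝕜 V]
    {p n q : ℕ} (S : Matrix (Fin p) (Fin n) 𝕜) (X : Matrix (Fin n) (Fin q) V) :
    Matrix (Fin p) (Fin q) V :=
  Matrix.of fun i j => ∑ k, S i k • X k j

/-- Right multiplication of a matrix over `V` by a scalar matrix. -/
def smulRs (𝕜 : Type*) [Semiring 𝕜] {V : Type*} [AddCommMonoid V] [Module 𝕜 V]
    {p n q : ℕ} (X : Matrix (Fin p) (Fin n) V) (T : Matrix (Fin n) (Fin q) 𝕜) :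
    Matrix (Fin p) (Fin q) V :=
  Matrix.of fun i j => ∑ k, T k j • X i k

/-- An operator space structure on `V`: a complete norm on each matrix level,
satisfying Ruan's axioms. -/
structure OperatorSpace (𝕜 : Type*) (V : Type*) [RCLike 𝕜] [AddCommGroup V]
    [Module 𝕜 V] where
  N : ∀ n : ℕ, Matrix (Fin n) (Fin n) V → ℝ
  norm_nonneg : ∀ n X, 0 ≤ N n X
  norm_eq_zero : ∀ n X, N n X = 0 ↔ X = 0
  norm_add_le : ∀ n X Y, N n (X + Y) ≤ N n X + N n Y
  norm_smul : ∀ n (c : 𝕜) X, N n (c • X) = ‖c‖ * N n X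
  complete : ∀ n (u : ℕ → Matrix (Fin n) (Fin n) V),
    (∀ ε : ℝ, 0 < ε → ∃ K, ∀ p ≥ K, ∀ q ≥ K, N n (u p - u q) < ε) →
    ∃ L, ∀ ε : ℝ, 0 < ε → ∃ K, ∀ p ≥ K, N n (u p - L) < ε
  norm_dirSum : ∀ (n m : ℕ) (X : Matrix (Fin n) (Fin n) V) (Y : Matrix (Fin m) (Fin m) V),
    N (n + m) (dirSumM X Y) = max (N n X) (N m Y)
  norm_smulLR : ∀ (n : ℕ) (S : Matrix (Fin n) (Fin n) 𝕜) (X : Matrix (Fin n) (Fin n) V)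
    (T : Matrix (Fin n) (Fin n) 𝕜),
    N n (smulLs 𝕜 S (smulRs 𝕜 X T)) ≤ scalarOpNorm S * N n X * scalarOpNorm T

/-- The entrywise (on `n×n` blocks) amplification `A^{(m)}` of a map on level `n`. -/
def blockAmp {V W : Type*} {n : ℕ}
    (A : Matrix (Fin n) (Fin n) V → Matrix (Fin n) (Fin n) W) (m : ℕ)
    (Z : Matrix (Fin (n * m)) (Fin (n * m)) V) :
    Matrix (Fin (n * m)) (Fin (n * m)) W :=
  Matrix.of fun i j =>
    A (Matrix.of fun a b => Z (finProdFinEquiv (a, (finProdFinEquiv.symm i).2))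
        (finProdFinEquiv (b, (finProdFinEquiv.symm j).2)))
      (finProdFinEquiv.symm i).1 (finProdFinEquiv.symm j).1

/-- `A` is completely bounded (w.r.t. operator space structures on source and target). -/
def CompletelyBounded {𝕜 V W : Type*} [RCLike 𝕜] [AddCommGroup V] [Module 𝕜 V]
    [AddCommGroup W] [Module 𝕜 W] (osV : OperatorSpace 𝕜 V) (osW : OperatorSpace 𝕜 W)
    {n : ℕ} (A : Matrix (Fin n) (Fin n) V → Matrix (Fin n) (Fin n) W) : Prop :=
  ∃ C : ℝ, ∀ (m : ℕ) (Z : Matrix (Fin (n * m)) (Fin (n * m)) V),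
    osW.N (n * m) (blockAmp A m Z) ≤ C * osV.N (n * m) Z

/-- `D` is the G-derivative of `F` at `X` (w.r.t. the operator space norm on the target). -/
def IsGDerivAt {𝕜 V W : Type*} [RCLike 𝕜] [AddCommGroup V] [Module 𝕜 V]
    [AddCommGroup W] [Module 𝕜 W] (osW : OperatorSpace 𝕜 W) {n : ℕ}
    (F : Matrix (Fin n) (Fin n) V → Matrix (Fin n) (Fin n) W)
    (X : Matrix (Fin n) (Fin n) V)
    (D : Matrix (Fin n) (Fin n) V → Matrix (Fin n) (Fin n) W) : Prop :=
  ∀ Z, ∀ ε : ℝ, 0 < ε → ∃ δ : ℝ, 0 < δ ∧ ∀ t : 𝕜, t ≠ 0 → ‖t‖ < δ →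
    osW.N n (t⁻¹ • (F (X + t • Z) - F X) - D Z) < ε

section SingleNC

variable {𝕜 : Type*} [RCLike 𝕜] {V W : Type*} [AddCommGroup V] [Module 𝕜 V]
  [AddCommGroup W] [Module 𝕜 W]

/-- A nc set: closed under direct sums. -/
def IsNCSet (Ω : ∀ n : ℕ, Set (Matrix (Fin n) (Fin n) V)) : Prop :=
  ∀ (n m : ℕ) (X : Matrix (Fin n) (Fin n) V) (Y : Matrix (Fin m) (Fin m) V),
    X ∈ Ω n → Y ∈ Ω m → dirSumM X Y ∈ Ω (n + m)

/-- A uniformly open set: around each of its points, it contains an nc ball. -/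
def UniformlyOpenNC (os : OperatorSpace 𝕜 V) (Ω : ∀ n : ℕ, Set (Matrix (Fin n) (Fin n) V)) :
    Prop :=
  ∀ (n : ℕ) (X : Matrix (Fin n) (Fin n) V), X ∈ Ω n → ∃ r : ℝ, 0 < r ∧
    ∀ (m : ℕ) (Z : Matrix (Fin (n * m)) (Fin (n * m)) V),
      os.N (n * m) (Z - amplify m X) < r → Z ∈ Ω (n * m)

/-- A nc function on `Ω`: it respects intertwinings by scalar matrices. -/
def IsNCFunction (𝕜 : Type*) [RCLike 𝕜] {V W : Type*} [AddCommGroup V] [Module 𝕜 V]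
    [AddCommGroup W] [Module 𝕜 W] (Ω : ∀ n : ℕ, Set (Matrix (Fin n) (Fin n) V))
    (f : ∀ n : ℕ, Matrix (Fin n) (Fin n) V → Matrix (Fin n) (Fin n) W) : Prop :=
  ∀ (n m : ℕ) (X : Matrix (Fin n) (Fin n) V) (Y : Matrix (Fin m) (Fin m) V)
    (T : Matrix (Fin n) (Fin m) 𝕜), X ∈ Ω n → Y ∈ Ω m →
    smulRs 𝕜 X T = smulLs 𝕜 T Y → smulRs 𝕜 (f n X) T = smulLs 𝕜 T (f m Y)

/-- `f` is uniformly locally bounded on `Ω`. -/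
def UnifLocBounded (osV : OperatorSpace 𝕜 V) (osW : OperatorSpace 𝕜 W)
    (Ω : ∀ n : ℕ, Set (Matrix (Fin n) (Fin n) V))
    (f : ∀ n : ℕ, Matrix (Fin n) (Fin n) V → Matrix (Fin n) (Fin n) W) : Prop :=
  ∀ (n : ℕ) (X : Matrix (Fin n) (Fin n) V), X ∈ Ω n → ∃ r : ℝ, 0 < r ∧ ∃ Mb : ℝ,
    ∀ (m : ℕ) (Z : Matrix (Fin (n * m)) (Fin (n * m)) V),
      osV.N (n * m) (Z - amplify m X) < r →
      Z ∈ Ω (n * m) ∧ osW.N (n * m) (f (n * m) Z) ≤ Mb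

/-- `f` is G-differentiable on `Ω`. -/
def GDifferentiableOn (osW : OperatorSpace 𝕜 W)
    (Ω : ∀ n : ℕ, Set (Matrix (Fin n) (Fin n) V))
    (f : ∀ n : ℕ, Matrix (Fin n) (Fin n) V → Matrix (Fin n) (Fin n) W) : Prop :=
  ∀ (n : ℕ) (X : Matrix (Fin n) (Fin n) V), X ∈ Ω n →
    ∃ D, IsGDerivAt osW (f n) X D

/-- `f` is continuous on `Ω` with respect to the uniformly-open topologies. -/
def NCContinuousOn (osV : OperatorSpace 𝕜 V) (osW : OperatorSpace 𝕜 W)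
    (Ω : ∀ n : ℕ, Set (Matrix (Fin n) (Fin n) V))
    (f : ∀ n : ℕ, Matrix (Fin n) (Fin n) V → Matrix (Fin n) (Fin n) W) : Prop :=
  ∀ (n : ℕ) (X : Matrix (Fin n) (Fin n) V), X ∈ Ω n → ∀ ε : ℝ, 0 < ε → ∃ δ : ℝ, 0 < δ ∧
    ∀ (m : ℕ) (Z : Matrix (Fin (n * m)) (Fin (n * m)) V), Z ∈ Ω (n * m) →
      osV.N (n * m) (Z - amplify m X) < δ →
      osW.N (n * m) (f (n * m) Z - amplify m (f n X)) < ε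

end SingleNC

/-- `Y` is continuously differentiable on `[a, b]` with derivative `Yd`, with respect to
the (level-`n`) operator space norm. -/
def IsC1MatOn {V : Type*} [AddCommGroup V] [Module ℝ V]
    (os : OperatorSpace ℝ V) {n : ℕ} (a b : ℝ)
    (Y Yd : ℝ → Matrix (Fin n) (Fin n) V) : Prop :=
  (∀ t ∈ Set.Icc a b, ∀ ε : ℝ, 0 < ε → ∃ η : ℝ, 0 < η ∧ ∀ t' ∈ Set.Icc a b,
    |t' - t| < η → os.N n (Y t' - Y t - ((t' - t) : ℝ) • Yd t) ≤ ε * |t' - t|) ∧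
  (∀ t ∈ Set.Icc a b, ∀ ε : ℝ, 0 < ε → ∃ η : ℝ, 0 < η ∧ ∀ t' ∈ Set.Icc a b,
    |t' - t| < η → os.N n (Yd t' - Yd t) < ε)

section AuxLemmas

lemma permMat_opNorm_le {n : ℕ} (e : Fin n ≃ Fin n) :
    scalarOpNorm (Matrix.of fun i j => if e i = j then (1:ℝ) else 0) ≤ 1 := by
  apply ContinuousLinearMap.opNorm_le_bound _ zero_le_one
  intro x
  rw [one_mul]
  have h : ∀ y : EuclideanSpace ℝ (Fin n), ‖y‖ = Real.sqrt (∑ i, ‖y i‖^2) :=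
    fun y => EuclideanSpace.norm_eq y
  rw [h, h x]
  apply Real.sqrt_le_sqrt
  have key : ∀ i, (Matrix.toEuclideanCLM (𝕜 := ℝ)
      (Matrix.of fun i j => if e i = j then (1:ℝ) else 0) x) i = x (e i) := by
    intro i
    have h2 := congrFun (Matrix.ofLp_toEuclideanCLM (𝕜 := ℝ)
      (Matrix.of fun i j => if e i = j then (1:ℝ) else 0) x) i
    rw [show (Matrix.toEuclideanCLM (𝕜 := ℝ)
      (Matrix.of fun i j => if e i = j then (1:ℝ) else 0) x) i
      = (WithLp.ofLp ((Matrix.toEuclideanCLM (𝕜 := ℝ)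
      (Matrix.of fun i j => if e i = j then (1:ℝ) else 0)) x)) i from rfl, h2]
    simp [Matrix.mulVec, dotProduct]
  calc ∑ i, ‖(Matrix.toEuclideanCLM (𝕜 := ℝ)
      (Matrix.of fun i j => if e i = j then (1:ℝ) else 0) x) i‖^2
      = ∑ i, ‖x (e i)‖^2 := by simp_rw [key]
    _ = ∑ i, ‖x i‖^2 := Equiv.sum_comp e (fun i => ‖x i‖^2)
    _ ≤ ∑ i, ‖x i‖^2 := le_rfl

lemma scalarOpNorm_nonneg {n : ℕ} (S : Matrix (Fin n) (Fin n) ℝ) :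
    0 ≤ scalarOpNorm S := norm_nonneg _

variable {Xs : Type*} [AddCommGroup Xs] [Module ℝ Xs] (os : OperatorSpace ℝ Xs)

lemma os_norm_submatrix_le {k l : ℕ} (e : Fin k ≃ Fin l) (A : Matrix (Fin l) (Fin l) Xs) :
    os.N k (A.submatrix e e) ≤ os.N l A := by
  have hk : k = l := by simpa using Fintype.card_congr e
  subst hk
  set P : Matrix (Fin k) (Fin k) ℝ := Matrix.of fun i j => if e i = j then 1 else 0 with hPdef
  have hP : A.submatrix e e = smulLs ℝ P (smulRs ℝ A P.transpose) := by
    ext i j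
    simp only [smulLs, smulRs, Matrix.of_apply, Matrix.transpose_apply, hPdef,
      Matrix.submatrix_apply, ite_smul, one_smul, zero_smul]
    simp [Finset.sum_ite_eq]
  have h1 : scalarOpNorm P ≤ 1 := permMat_opNorm_le e
  have h2 : scalarOpNorm P.transpose ≤ 1 := by
    have : P.transpose = Matrix.of fun i j => if e.symm i = j then (1:ℝ) else 0 := by
      ext i j
      simp only [Matrix.transpose_apply, hPdef, Matrix.of_apply]
      congr 1
      simp [Equiv.eq_symm_apply, eq_comm]
    rw [this]
    exact permMat_opNorm_le e.symm
  have hnn := os.norm_nonneg k A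
  have h3 := os.norm_smulLR k P A P.transpose
  have h4 := scalarOpNorm_nonneg P
  have h5 := scalarOpNorm_nonneg P.transpose
  rw [hP]
  nlinarith [mul_nonneg h4 hnn]

def ampSuccEquiv (n m : ℕ) : Fin (n*(m+1)) ≃ Fin (n*m + n) :=
  finProdFinEquiv.symm.trans <|
  (Equiv.prodCongr (Equiv.refl (Fin n)) finSumFinEquiv.symm).trans <|
  (Equiv.prodSumDistrib (Fin n) (Fin m) (Fin 1)).trans <|
  (Equiv.sumCongr finProdFinEquiv (finProdFinEquiv.trans (finCongr (mul_one n)))).trans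
  finSumFinEquiv

lemma ampSuccEquiv_inl {n m : ℕ} {i : Fin (n*(m+1))} {k' : Fin m}
    (hk : finSumFinEquiv.symm (finProdFinEquiv.symm i).2 = Sum.inl k') :
    ampSuccEquiv n m i
      = finSumFinEquiv (Sum.inl (finProdFinEquiv ((finProdFinEquiv.symm i).1, k'))) := by
  have h0 : ampSuccEquiv n m i = finSumFinEquiv (Sum.map (⇑finProdFinEquiv)
      (⇑(finProdFinEquiv.trans (finCongr (mul_one n))))
      ((Equiv.prodSumDistrib (Fin n) (Fin m) (Fin 1))
        ((finProdFinEquiv.symm i).1, finSumFinEquiv.symm (finProdFinEquiv.symm i).2))) := rfl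
  rw [h0, hk, Equiv.prodSumDistrib_apply_left, Sum.map_inl]

lemma ampSuccEquiv_inr {n m : ℕ} {i : Fin (n*(m+1))} {k1 : Fin 1}
    (hk : finSumFinEquiv.symm (finProdFinEquiv.symm i).2 = Sum.inr k1) :
    ampSuccEquiv n m i
      = finSumFinEquiv (Sum.inr (finCongr (mul_one n)
          (finProdFinEquiv ((finProdFinEquiv.symm i).1, k1)))) := by
  have h0 : ampSuccEquiv n m i = finSumFinEquiv (Sum.map (⇑finProdFinEquiv)
      (⇑(finProdFinEquiv.trans (finCongr (mul_one n))))
      ((Equiv.prodSumDistrib (Fin n) (Fin m) (Fin 1))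
        ((finProdFinEquiv.symm i).1, finSumFinEquiv.symm (finProdFinEquiv.symm i).2))) := rfl
  rw [h0, hk, Equiv.prodSumDistrib_apply_right, Sum.map_inr]
  rfl

lemma amplify_succ_eq {n m : ℕ} (X : Matrix (Fin n) (Fin n) Xs) :
    amplify (m+1) X
      = (dirSumM (amplify m X) X).submatrix (ampSuccEquiv n m) (ampSuccEquiv n m) := by
  ext i j
  rw [Matrix.submatrix_apply]
  rcases hk : finSumFinEquiv.symm (finProdFinEquiv.symm i).2 with k' | k1 <;>
    rcases hl : finSumFinEquiv.symm (finProdFinEquiv.symm j).2 with l' | l1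
  · rw [ampSuccEquiv_inl hk, ampSuccEquiv_inl hl]
    have h2i : (finProdFinEquiv.symm i).2 = finSumFinEquiv (Sum.inl k') :=
      (Equiv.symm_apply_eq _).mp hk
    have h2j : (finProdFinEquiv.symm j).2 = finSumFinEquiv (Sum.inl l') :=
      (Equiv.symm_apply_eq _).mp hl
    simp only [amplify, dirSumM, Matrix.reindex_apply, Matrix.submatrix_apply,
      Equiv.symm_apply_apply, Matrix.fromBlocks_apply₁₁, Matrix.of_apply, h2i, h2j]
    by_cases hkl : k' = l'
    · simp [hkl]
    · have hkl2 : (finSumFinEquiv (Sum.inl k' : Fin m ⊕ Fin 1))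
          ≠ finSumFinEquiv (Sum.inl l' : Fin m ⊕ Fin 1) := by
        intro h; exact hkl (Sum.inl_injective (finSumFinEquiv.injective h))
      rw [if_neg hkl2, if_neg hkl]
  · rw [ampSuccEquiv_inl hk, ampSuccEquiv_inr hl]
    have h2i : (finProdFinEquiv.symm i).2 = finSumFinEquiv (Sum.inl k') :=
      (Equiv.symm_apply_eq _).mp hk
    have h2j : (finProdFinEquiv.symm j).2 = finSumFinEquiv (Sum.inr l1) :=
      (Equiv.symm_apply_eq _).mp hl
    simp only [amplify, dirSumM, Matrix.reindex_apply, Matrix.submatrix_apply,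
      Equiv.symm_apply_apply, Matrix.fromBlocks_apply₁₂, Matrix.of_apply, h2i, h2j,
      Matrix.zero_apply]
    rw [if_neg (fun h => by simpa using finSumFinEquiv.injective h)]
  · rw [ampSuccEquiv_inr hk, ampSuccEquiv_inl hl]
    have h2i : (finProdFinEquiv.symm i).2 = finSumFinEquiv (Sum.inr k1) :=
      (Equiv.symm_apply_eq _).mp hk
    have h2j : (finProdFinEquiv.symm j).2 = finSumFinEquiv (Sum.inl l') :=
      (Equiv.symm_apply_eq _).mp hl
    simp only [amplify, dirSumM, Matrix.reindex_apply, Matrix.submatrix_apply,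
      Equiv.symm_apply_apply, Matrix.fromBlocks_apply₂₁, Matrix.of_apply, h2i, h2j,
      Matrix.zero_apply]
    rw [if_neg (fun h => by simpa using finSumFinEquiv.injective h)]
  · rw [ampSuccEquiv_inr hk, ampSuccEquiv_inr hl]
    have h2i : (finProdFinEquiv.symm i).2 = finSumFinEquiv (Sum.inr k1) :=
      (Equiv.symm_apply_eq _).mp hk
    have h2j : (finProdFinEquiv.symm j).2 = finSumFinEquiv (Sum.inr l1) :=
      (Equiv.symm_apply_eq _).mp hl
    have hk1l1 : k1 = l1 := Subsingleton.elim _ _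
    simp only [amplify, dirSumM, Matrix.reindex_apply, Matrix.submatrix_apply,
      Equiv.symm_apply_apply, Matrix.fromBlocks_apply₂₂, Matrix.of_apply, h2i, h2j, hk1l1,
      if_pos rfl]
    rw [if_pos trivial]
    congr 1 <;>
    · apply Fin.ext
      simp [finCongr_apply, Fin.coe_cast, finProdFinEquiv_apply_val, Fin.val_eq_zero]

lemma os_norm_amplify_le (n m : ℕ) (X : Matrix (Fin n) (Fin n) Xs) :
    os.N (n * m) (amplify m X) ≤ os.N n X := by
  induction m with
  | zero =>
    have h0 : amplify 0 X = (0 : Matrix (Fin (n*0)) (Fin (n*0)) Xs) := by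
      ext i j
      exact absurd i.isLt (by simp)
    rw [h0, (os.norm_eq_zero _ 0).mpr rfl]
    exact os.norm_nonneg n X
  | succ m ih =>
    rw [amplify_succ_eq X]
    calc os.N (n*(m+1)) ((dirSumM (amplify m X) X).submatrix
          (ampSuccEquiv n m) (ampSuccEquiv n m))
        ≤ os.N (n*m+n) (dirSumM (amplify m X) X) :=
          os_norm_submatrix_le os (ampSuccEquiv n m) _
      _ = max (os.N (n*m) (amplify m X)) (os.N n X) := os.norm_dirSum _ _ _ _
      _ ≤ os.N n X := max_le ih le_rfl

lemma amplify_sub' {n : ℕ} (m : ℕ) (X Y : Matrix (Fin n) (Fin n) Xs) :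
    amplify m (X - Y) = amplify m X - amplify m Y := by
  ext i j
  simp only [amplify, Matrix.of_apply, Matrix.sub_apply]
  split <;> simp

end AuxLemmas

/-- **C¹ functions with values in a uniformly open nc set form a uniformly open nc set**:
around any C¹ function `Y_*` with values in `Γ` there is a C¹-ball (uniformly over all
amplification levels `m`) of C¹ functions with values in `Γ`. -/
theorem c1_functions_into_uniformly_open_nc_set_uniformly_open
    {Xs : Type*} [AddCommGroup Xs] [Module ℝ Xs]
    (osX : OperatorSpace ℝ Xs)
    (Γ : ∀ n : ℕ, Set (Matrix (Fin n) (Fin n) Xs))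
    (hΓnc : IsNCSet Γ) (hΓopen : UniformlyOpenNC osX Γ)
    (s r : ℕ) (hs : 0 < s) (hr : 0 < r)
    (a b : ℝ) (hab : a ≤ b)
    (Ystar Ystard : ℝ → Matrix (Fin (s * r)) (Fin (s * r)) Xs)
    (hC1 : IsC1MatOn osX a b Ystar Ystard)
    (hval : ∀ t ∈ Set.Icc a b, Ystar t ∈ Γ (s * r)) :
    ∃ μ : ℝ, 0 < μ ∧ ∀ (m : ℕ)
      (Y Yd : ℝ → Matrix (Fin (s * r * m)) (Fin (s * r * m)) Xs),
      IsC1MatOn osX a b Y Yd →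
      (∃ c : ℝ, c < μ ∧ ∀ t ∈ Set.Icc a b,
        osX.N (s * r * m) (Y t - amplify m (Ystar t)) ≤ c ∧
        osX.N (s * r * m) (Yd t - amplify m (Ystard t)) ≤ c) →
      ∀ t ∈ Set.Icc a b, Y t ∈ Γ (s * r * m) := by
  have key : ∀ t : ℝ, ∃ ρ : ℝ, 0 < ρ ∧ ∃ η : ℝ, 0 < η ∧ (t ∈ Set.Icc a b →
      (∀ (m : ℕ) (Z : Matrix (Fin (s*r*m)) (Fin (s*r*m)) Xs),
        osX.N (s*r*m) (Z - amplify m (Ystar t)) < ρ → Z ∈ Γ (s*r*m)) ∧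
      (∀ t' ∈ Set.Icc a b, |t' - t| < η →
        osX.N (s*r) (Ystar t' - Ystar t) < ρ/2)) := by
    intro t
    by_cases ht : t ∈ Set.Icc a b
    · obtain ⟨ρ, hρ, hopen⟩ := hΓopen (s*r) (Ystar t) (hval t ht)
      obtain ⟨η₁, hη₁, hcont⟩ := hC1.1 t ht 1 one_pos
      set Cd := osX.N (s*r) (Ystard t) with hCd
      have hCd0 : 0 ≤ Cd := osX.norm_nonneg _ _
      refine ⟨ρ, hρ, min η₁ (ρ/2/(1+Cd)), lt_min hη₁ (by positivity),
        fun _ => ⟨hopen, ?_⟩⟩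
      intro t' ht' hlt
      have h1 := hcont t' ht' (lt_of_lt_of_le hlt (min_le_left _ _))
      have h2 : osX.N (s*r) (Ystar t' - Ystar t) ≤ |t' - t| * (1 + Cd) := by
        have h3 := osX.norm_add_le (s*r)
          (Ystar t' - Ystar t - ((t'-t):ℝ) • Ystard t) (((t'-t):ℝ) • Ystard t)
        have e3 : Ystar t' - Ystar t - ((t'-t):ℝ) • Ystard t + ((t'-t):ℝ) • Ystard t
            = Ystar t' - Ystar t := by abel
        rw [e3] at h3
        have h4 : osX.N (s*r) (((t'-t):ℝ) • Ystard t) = |t' - t| * Cd := by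
          rw [osX.norm_smul, Real.norm_eq_abs]
        nlinarith [h3, h1, h4]
      have hlt2 := lt_of_lt_of_le hlt (min_le_right _ _)
      have h5 : |t' - t| * (1+Cd) < ρ/2 := by
        calc |t'-t| * (1+Cd) < (ρ/2/(1+Cd)) * (1+Cd) :=
              mul_lt_mul_of_pos_right hlt2 (by positivity)
          _ = ρ/2 := by field_simp
      linarith
    · exact ⟨1, one_pos, 1, one_pos, fun h => absurd h ht⟩
  choose ρ hρ η hη hprop using key
  have hcover : Set.Icc a b ⊆ ⋃ (i : Set.Icc a b), Metric.ball (i : ℝ) (η i) := by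
    intro t ht
    exact Set.mem_iUnion.mpr ⟨⟨t, ht⟩, by simpa [Metric.mem_ball] using hη t⟩
  obtain ⟨F, hF⟩ := isCompact_Icc.elim_finite_subcover
    (fun i : Set.Icc a b => Metric.ball (i : ℝ) (η i)) (fun i => Metric.isOpen_ball) hcover
  have hFne : F.Nonempty := by
    by_contra h
    rw [Finset.not_nonempty_iff_eq_empty] at h
    have := hF (Set.left_mem_Icc.mpr hab)
    simp [h] at this
  refine ⟨F.inf' hFne (fun i => ρ (i : ℝ) / 2), ?_, ?_⟩
  · exact (Finset.lt_inf'_iff _).mpr (fun i _ => by have := hρ (i:ℝ); positivity)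
  · intro m Y Yd hYC1 hex t ht
    obtain ⟨c, hc, hbound⟩ := hex
    have htmem := hF ht
    rw [Set.mem_iUnion₂] at htmem
    obtain ⟨i, hiF, hti⟩ := htmem
    obtain ⟨hopen, hcont⟩ := hprop (i:ℝ) i.2
    apply hopen m (Y t)
    have e1 : Y t - amplify m (Ystar (i:ℝ))
        = (Y t - amplify m (Ystar t)) + amplify m (Ystar t - Ystar (i:ℝ)) := by
      rw [amplify_sub']; abel
    have h6 := osX.norm_add_le _ (Y t - amplify m (Ystar t))
      (amplify m (Ystar t - Ystar (i:ℝ)))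
    rw [← e1] at h6
    have h7 := os_norm_amplify_le osX (s*r) m (Ystar t - Ystar (i:ℝ))
    have h8 := (hbound t ht).1
    have h9 : osX.N (s*r) (Ystar t - Ystar (i:ℝ)) < ρ (i:ℝ) / 2 := by
      apply hcont t ht
      simpa [Real.dist_eq] using hti
    have h10 : F.inf' hFne (fun i => ρ (i : ℝ) / 2) ≤ ρ (i:ℝ)/2 :=
      Finset.inf'_le _ hiF
    linarith
end

section
/- Invertibility and norm bound for a Volterra-type operator on C¹. Let E be a real Banach space, t₀ ∈ ℝ, δ ∈ (0, 1], and let A : [t₀−δ, t₀+δ] → L(E) be a continuous family of bounded linear operators with κ := max_{t∈[t₀−δ,t₀+δ]} ‖A(t)‖ < 1/δ. Define the linear operator T on C¹([t₀−δ, t₀+δ], E) by (TZ)(t) = Z(t) − ∫_{t₀}^{t} A(τ)(Z(τ)) dτ. Then T is a bounded linear bijection of C¹([t₀−δ, t₀+δ], E) onto itself, and its inverse satisfies ‖T^{−1}G‖_{C¹} ≤ ((1 − κδ + κ)/(1 − κδ)) ‖G‖_{C¹} for every G ∈ C¹([t₀−δ, t₀+δ], E), where ‖Z‖_{C¹} =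 max{ sup_t ‖Z(t)‖, sup_t ‖Ż(t)‖ }. -/
open Set intervalIntegral

section Helpers

variable {E : Type*} [NormedAddCommGroup E] [NormedSpace ℝ E]

/-- extension of a function continuous on `Icc a b` to a continuous function on `ℝ`. -/
noncomputable def extIcc {F : Type*} {a b : ℝ} (h : a ≤ b) (u : ℝ → F) : ℝ → F :=
  Set.IccExtend h ((Set.Icc a b).restrict u)

lemma extIcc_eq {F : Type*} {a b : ℝ} (h : a ≤ b) (u : ℝ → F) {x : ℝ}
    (hx : x ∈ Set.Icc a b) : extIcc h u x = u x := by
  simp [extIcc, Set.IccExtend_of_mem h _ hx]; rfl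

lemma extIcc_continuous {F : Type*} [TopologicalSpace F] {a b : ℝ} (h : a ≤ b) {u : ℝ → F}
    (hu : ContinuousOn u (Set.Icc a b)) : Continuous (extIcc h u) :=
  Continuous.Icc_extend' (continuousOn_iff_continuous_restrict.1 hu)

/-- FTC within the interval for functions continuous on the interval. -/
lemma hasDerivWithinAt_primitive' [CompleteSpace E] {a b t0 : ℝ} (h : a ≤ b)
    (ht0 : t0 ∈ Set.Icc a b)
    {u : ℝ → E} (hu : ContinuousOn u (Set.Icc a b)) {t : ℝ} (ht : t ∈ Set.Icc a b) :
    HasDerivWithinAt (fun x => ∫ τ in t0..x, u τ) (u t) (Set.Icc a b) t := by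
  have hc := extIcc_continuous h hu
  have hd : HasDerivAt (fun x => ∫ τ in t0..x, extIcc h u τ) (extIcc h u t) t :=
    (hc.integral_hasStrictDerivAt t0 t).hasDerivAt
  have heq : ∀ y ∈ Set.Icc a b,
      (∫ τ in t0..y, u τ) = ∫ τ in t0..y, extIcc h u τ := by
    intro y hy
    apply intervalIntegral.integral_congr
    intro τ hτ
    exact (extIcc_eq h u (Set.ordConnected_Icc.uIcc_subset ht0 hy hτ)).symm
  rw [extIcc_eq h u ht] at hd
  exact (hd.hasDerivWithinAt).congr heq (heq t ht)

end Helpers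

/-- `Z` is continuously differentiable on `[t0-δ, t0+δ]` with derivative `Zd`. -/
def IsC1OnIcc {E : Type*} [NormedAddCommGroup E] [NormedSpace ℝ E]
    (t0 δ : ℝ) (Z Zd : ℝ → E) : Prop :=
  (∀ t ∈ Set.Icc (t0 - δ) (t0 + δ),
    HasDerivWithinAt Z (Zd t) (Set.Icc (t0 - δ) (t0 + δ)) t) ∧
  ContinuousOn Zd (Set.Icc (t0 - δ) (t0 + δ))

/-- **Invertibility and norm bound for a Volterra-type operator on C¹**:
`(TZ)(t) = Z(t) - ∫_{t0}^t A(τ)(Z(τ)) dτ` is a bounded linear bijection of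
`C¹([t0-δ, t0+δ], E)` onto itself and
`‖T⁻¹G‖_{C¹} ≤ ((1 - κδ + κ)/(1 - κδ))‖G‖_{C¹}`. -/
theorem volterra_type_operator_invertible_on_C1
    {E : Type*} [NormedAddCommGroup E] [NormedSpace ℝ E] [CompleteSpace E]
    (t0 δ : ℝ) (hδ0 : 0 < δ) (hδ1 : δ ≤ 1)
    (A : ℝ → E →L[ℝ] E)
    (hAcont : ContinuousOn A (Set.Icc (t0 - δ) (t0 + δ)))
    (κ : ℝ) (hκ0 : 0 ≤ κ)
    (hκ : ∀ t ∈ Set.Icc (t0 - δ) (t0 + δ), ‖A t‖ ≤ κ)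
    (hκδ : κ * δ < 1) :
    -- T maps C¹ into C¹, with derivative of TZ given by Zd(t) - A(t)(Z(t))
    (∀ Z Zd : ℝ → E, IsC1OnIcc t0 δ Z Zd →
      IsC1OnIcc t0 δ (fun t => Z t - ∫ τ in t0..t, A τ (Z τ))
        (fun t => Zd t - A t (Z t))) ∧
    -- T is bounded on C¹
    (∃ C : ℝ, ∀ (Z Zd : ℝ → E) (bZ : ℝ), IsC1OnIcc t0 δ Z Zd →
      (∀ t ∈ Set.Icc (t0 - δ) (t0 + δ), max ‖Z t‖ ‖Zd t‖ ≤ bZ) →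
      ∀ t ∈ Set.Icc (t0 - δ) (t0 + δ),
        max ‖Z t - ∫ τ in t0..t, A τ (Z τ)‖ ‖Zd t - A t (Z t)‖ ≤ C * bZ) ∧
    -- T is a bijection of C¹ onto itself, with the stated bound on the inverse:
    -- for every C¹ function G, there is a C¹ solution Z of TZ = G with
    -- ‖Z‖_{C¹} ≤ ((1 - κδ + κ)/(1 - κδ))‖G‖_{C¹}, and the solution is unique
    (∀ G Gd : ℝ → E, IsC1OnIcc t0 δ G Gd →
      (∃ Z Zd : ℝ → E, IsC1OnIcc t0 δ Z Zd ∧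
        (∀ t ∈ Set.Icc (t0 - δ) (t0 + δ), Z t - ∫ τ in t0..t, A τ (Z τ) = G t) ∧
        ∀ bG : ℝ, (∀ t ∈ Set.Icc (t0 - δ) (t0 + δ), max ‖G t‖ ‖Gd t‖ ≤ bG) →
          ∀ t ∈ Set.Icc (t0 - δ) (t0 + δ),
            max ‖Z t‖ ‖Zd t‖ ≤ ((1 - κ * δ + κ) / (1 - κ * δ)) * bG) ∧
      (∀ Z Zd Z' Zd' : ℝ → E, IsC1OnIcc t0 δ Z Zd → IsC1OnIcc t0 δ Z' Zd' →
        (∀ t ∈ Set.Icc (t0 - δ) (t0 + δ), Z t - ∫ τ in t0..t, A τ (Z τ) = G t) →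
        (∀ t ∈ Set.Icc (t0 - δ) (t0 + δ), Z' t - ∫ τ in t0..t, A τ (Z' τ) = G t) →
        ∀ t ∈ Set.Icc (t0 - δ) (t0 + δ), Z t = Z' t)) := by
  set s : Set ℝ := Set.Icc (t0 - δ) (t0 + δ) with hs
  have hab : t0 - δ ≤ t0 + δ := by linarith
  have ht0s : t0 ∈ s := ⟨by linarith, by linarith⟩
  have habs : ∀ t ∈ s, |t - t0| ≤ δ := by
    intro t ht
    rw [abs_le]; constructor <;> [linarith [ht.1]; linarith [ht.2]]
  have huIcc : ∀ t ∈ s, Set.uIcc t0 t ⊆ s := fun t ht =>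
    Set.ordConnected_Icc.uIcc_subset ht0s ht
  have huIoc : ∀ t ∈ s, Set.uIoc t0 t ⊆ s := fun t ht =>
    fun τ hτ => huIcc t ht (Set.Ioc_subset_Icc_self hτ)
  -- continuity of Z on s from IsC1OnIcc
  have hcontOf : ∀ Z Zd : ℝ → E, IsC1OnIcc t0 δ Z Zd → ContinuousOn Z s := by
    intro Z Zd hZ t ht
    exact (hZ.1 t ht).continuousWithinAt
  refine ⟨?_, ?_, ?_⟩
  · -- Part 1
    intro Z Zd hZ
    have hg : ContinuousOn (fun τ => A τ (Z τ)) s := hAcont.clm_apply (hcontOf Z Zd hZ)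
    constructor
    · intro t ht
      exact (hZ.1 t ht).sub (hasDerivWithinAt_primitive' hab ht0s hg ht)
    · exact hZ.2.sub (hAcont.clm_apply (hcontOf Z Zd hZ))
  · -- Part 2
    refine ⟨1 + κ, ?_⟩
    intro Z Zd bZ hZ hbZ t ht
    have hbZ0 : 0 ≤ bZ :=
      le_trans (norm_nonneg (Z t0)) (le_trans (le_max_left _ _) (hbZ t0 ht0s))
    have hZb : ∀ τ ∈ s, ‖Z τ‖ ≤ bZ := fun τ hτ =>
      le_trans (le_max_left _ _) (hbZ τ hτ)
    have hZdb : ∀ τ ∈ s, ‖Zd τ‖ ≤ bZ := fun τ hτ =>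
      le_trans (le_max_right _ _) (hbZ τ hτ)
    have hint : ‖∫ τ in t0..t, A τ (Z τ)‖ ≤ κ * bZ := by
      have h1 : ‖∫ τ in t0..t, A τ (Z τ)‖ ≤ κ * bZ * |t - t0| := by
        apply intervalIntegral.norm_integral_le_of_norm_le_const
        intro τ hτ
        have hτs : τ ∈ s := huIoc t ht hτ
        calc ‖A τ (Z τ)‖ ≤ ‖A τ‖ * ‖Z τ‖ := (A τ).le_opNorm _
          _ ≤ κ * bZ := mul_le_mul (hκ τ hτs) (hZb τ hτs) (norm_nonneg _) hκ0
      have h2 : κ * bZ * |t - t0| ≤ κ * bZ * 1 := by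
        apply mul_le_mul_of_nonneg_left _ (by positivity)
        exact le_trans (habs t ht) hδ1
      linarith
    apply max_le
    · calc ‖Z t - ∫ τ in t0..t, A τ (Z τ)‖
          ≤ ‖Z t‖ + ‖∫ τ in t0..t, A τ (Z τ)‖ := norm_sub_le _ _
        _ ≤ bZ + κ * bZ := add_le_add (hZb t ht) hint
        _ = (1 + κ) * bZ := by ring
    · calc ‖Zd t - A t (Z t)‖ ≤ ‖Zd t‖ + ‖A t (Z t)‖ := norm_sub_le _ _
        _ ≤ bZ + κ * bZ := by
            refine add_le_add (hZdb t ht) ?_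
            calc ‖A t (Z t)‖ ≤ ‖A t‖ * ‖Z t‖ := (A t).le_opNorm _
              _ ≤ κ * bZ := mul_le_mul (hκ t ht) (hZb t ht) (norm_nonneg _) hκ0
        _ = (1 + κ) * bZ := by ring
  · -- Part 3
    intro G Gd hG
    have hGcont : ContinuousOn G s := hcontOf G Gd hG
    have hAe : Continuous (extIcc (a := t0 - δ) (b := t0 + δ) hab A) :=
      extIcc_continuous hab hAcont
    -- the map v f : ℝ → E
    set Ae := extIcc (a := t0 - δ) (b := t0 + δ) hab A with hAedef
    have hAeq : ∀ τ ∈ s, Ae τ = A τ := fun τ hτ => extIcc_eq hab A hτ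
    have hvcont : ∀ f : C(s, E), Continuous (fun τ => Ae τ (Set.IccExtend hab (⇑f) τ)) :=
      fun f => hAe.clm_apply (Continuous.Icc_extend' f.continuous)
    have hprimcont : ∀ f : C(s, E),
        Continuous (fun x => ∫ τ in t0..x, Ae τ (Set.IccExtend hab (⇑f) τ)) := by
      intro f
      refine continuous_iff_continuousAt.2 fun b => ?_
      exact (((hvcont f).integral_hasStrictDerivAt t0 b).hasDerivAt).continuousAt
    -- the contraction
    set Φ : C(s, E) → C(s, E) := fun f =>
      ⟨fun t => G t.1 + ∫ τ in t0..t.1, Ae τ (Set.IccExtend hab (⇑f) τ),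
        ((continuousOn_iff_continuous_restrict.1 hGcont)).add
          ((hprimcont f).comp continuous_subtype_val)⟩ with hΦdef
    have hΦapp : ∀ (f : C(s, E)) (t : s),
        Φ f t = G t.1 + ∫ τ in t0..t.1, Ae τ (Set.IccExtend hab (⇑f) τ) := fun f t => rfl
    set K : NNReal := ⟨κ * δ, by positivity⟩ with hKdef
    have hKκδ : (K : ℝ) = κ * δ := rfl
    have hlip : LipschitzWith K Φ := by
      apply LipschitzWith.of_dist_le_mul
      intro f g
      rw [hKκδ]
      apply (ContinuousMap.dist_le (by positivity)).2
      intro t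
      have htmem : (t : ℝ) ∈ s := t.2
      rw [hΦapp, hΦapp, dist_eq_norm]
      have hint_eq : (G t.1 + ∫ τ in t0..t.1, Ae τ (Set.IccExtend hab (⇑f) τ)) -
          (G t.1 + ∫ τ in t0..t.1, Ae τ (Set.IccExtend hab (⇑g) τ)) =
          ∫ τ in t0..t.1, (Ae τ (Set.IccExtend hab (⇑f) τ) -
            Ae τ (Set.IccExtend hab (⇑g) τ)) := by
        rw [intervalIntegral.integral_sub ((hvcont f).intervalIntegrable _ _)
          ((hvcont g).intervalIntegrable _ _)]
        abel
      rw [hint_eq]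
      have hb : ‖∫ τ in t0..t.1, (Ae τ (Set.IccExtend hab (⇑f) τ) -
          Ae τ (Set.IccExtend hab (⇑g) τ))‖ ≤ κ * dist f g * |t.1 - t0| := by
        apply intervalIntegral.norm_integral_le_of_norm_le_const
        intro τ hτ
        have hτs : τ ∈ s := huIoc t.1 htmem hτ
        rw [← map_sub, hAeq τ hτs]
        calc ‖A τ (Set.IccExtend hab (⇑f) τ - Set.IccExtend hab (⇑g) τ)‖
            ≤ ‖A τ‖ * ‖Set.IccExtend hab (⇑f) τ - Set.IccExtend hab (⇑g) τ‖ :=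
              (A τ).le_opNorm _
          _ ≤ κ * dist f g := by
              apply mul_le_mul (hκ τ hτs) _ (norm_nonneg _) hκ0
              rw [Set.IccExtend_of_mem hab _ hτs, Set.IccExtend_of_mem hab _ hτs,
                ← dist_eq_norm]
              exact ContinuousMap.dist_apply_le_dist _
      calc ‖∫ τ in t0..t.1, (Ae τ (Set.IccExtend hab (⇑f) τ) -
            Ae τ (Set.IccExtend hab (⇑g) τ))‖
          ≤ κ * dist f g * |t.1 - t0| := hb
        _ ≤ κ * dist f g * δ := by
            apply mul_le_mul_of_nonneg_left (habs t.1 htmem) (by positivity)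
        _ = κ * δ * dist f g := by ring
    have hcontr : ContractingWith K Φ := by
      constructor
      · rw [← NNReal.coe_lt_one, hKκδ]; exact hκδ
      · exact hlip
    haveI : Nonempty C(s, E) := ⟨0⟩
    set fp : C(s, E) := ContractingWith.fixedPoint Φ hcontr with hfpdef
    have hfp : Φ fp = fp := hcontr.fixedPoint_isFixedPt
    set Z : ℝ → E := Set.IccExtend hab (⇑fp) with hZdef
    have hZval : ∀ t (ht : t ∈ s), Z t = fp ⟨t, ht⟩ := fun t ht =>
      Set.IccExtend_of_mem hab _ ht
    have hZcont : Continuous Z := Continuous.Icc_extend' fp.continuous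
    have hfix : ∀ t (ht : t ∈ s),
        Z t = G t + ∫ τ in t0..t, Ae τ (Z τ) := by
      intro t ht
      rw [hZval t ht, ← hfp]
      rfl
    have hint_congr : ∀ t ∈ s,
        (∫ τ in t0..t, A τ (Z τ)) = ∫ τ in t0..t, Ae τ (Z τ) := by
      intro t ht
      apply intervalIntegral.integral_congr
      intro τ hτ
      show A τ (Z τ) = Ae τ (Z τ)
      rw [hAeq τ (huIcc t ht hτ)]
    have hsol : ∀ t ∈ s, Z t - ∫ τ in t0..t, A τ (Z τ) = G t := by
      intro t ht
      rw [hint_congr t ht, hfix t ht]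
      abel
    set Zd : ℝ → E := fun t => Gd t + A t (Z t) with hZddef
    have hvZcont : Continuous (fun τ => Ae τ (Z τ)) := hAe.clm_apply hZcont
    have hZC1 : IsC1OnIcc t0 δ Z Zd := by
      constructor
      · intro t ht
        have hW : HasDerivWithinAt (fun x => G x + ∫ τ in t0..x, Ae τ (Z τ))
            (Gd t + Ae t (Z t)) s t := by
          refine (hG.1 t ht).add ?_
          exact ((hvZcont.integral_hasStrictDerivAt t0 t).hasDerivAt).hasDerivWithinAt
        rw [hAeq t ht] at hW
        exact hW.congr (fun y hy => hfix y hy) (hfix t ht)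
      · exact hG.2.add (hAcont.clm_apply hZcont.continuousOn)
    refine ⟨⟨Z, Zd, hZC1, hsol, ?_⟩, ?_⟩
    · -- the norm bound
      intro bG hbG t ht
      have hbG0 : 0 ≤ bG :=
        le_trans (le_trans (norm_nonneg (G t0)) (le_max_left _ _)) (hbG t0 ht0s)
      have hGb : ∀ τ ∈ s, ‖G τ‖ ≤ bG := fun τ hτ => le_trans (le_max_left _ _) (hbG τ hτ)
      have hGdb : ∀ τ ∈ s, ‖Gd τ‖ ≤ bG := fun τ hτ => le_trans (le_max_right _ _) (hbG τ hτ)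
      have hpos : 0 < 1 - κ * δ := by linarith
      -- bound ‖fp‖
      have hΦ0 : ‖Φ 0‖ ≤ bG := by
        apply (ContinuousMap.norm_le _ hbG0).2
        intro x
        have h0 : (fun τ => Ae τ (Set.IccExtend hab (⇑(0 : C(s, E))) τ)) = fun _ => 0 := by
          funext τ
          have : Set.IccExtend hab (⇑(0 : C(s, E))) τ = 0 := rfl
          rw [this, map_zero]
        rw [hΦapp, h0]
        simp only [intervalIntegral.integral_zero, add_zero]
        exact hGb x.1 x.2
      have hfpnorm : ‖fp‖ * (1 - κ * δ) ≤ bG := by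
        have h1 : dist fp (0 : C(s, E)) ≤ dist (Φ fp) (Φ 0) + dist (Φ 0) 0 := by
          rw [hfp]; exact dist_triangle _ _ _
        have h2 : dist (Φ fp) (Φ 0) ≤ κ * δ * dist fp 0 := by
          have := hlip.dist_le_mul fp 0
          rwa [hKκδ] at this
        have h3 : dist (Φ 0) (0 : C(s, E)) ≤ bG := by rw [dist_zero_right]; exact hΦ0
        have h4 : dist fp (0 : C(s, E)) = ‖fp‖ := dist_zero_right fp
        nlinarith [h1, h2, h3, h4]
      have hZle : ∀ τ ∈ s, ‖Z τ‖ * (1 - κ * δ) ≤ bG := by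
        intro τ hτ
        have : ‖Z τ‖ ≤ ‖fp‖ := by
          rw [hZval τ hτ]; exact fp.norm_coe_le_norm _
        calc ‖Z τ‖ * (1 - κ * δ) ≤ ‖fp‖ * (1 - κ * δ) :=
              mul_le_mul_of_nonneg_right this hpos.le
          _ ≤ bG := hfpnorm
      rw [div_mul_eq_mul_div, le_div_iff₀ hpos, max_mul_of_nonneg _ _ hpos.le]
      apply max_le
      · calc ‖Z t‖ * (1 - κ * δ) ≤ bG := hZle t ht
          _ ≤ (1 - κ * δ + κ) * bG := by
              refine le_mul_of_one_le_left hbG0 ?_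
              have : κ * δ ≤ κ := mul_le_of_le_one_right hκ0 hδ1
              linarith
      · have hZdle : ‖Zd t‖ ≤ bG + κ * ‖Z t‖ := by
          calc ‖Zd t‖ ≤ ‖Gd t‖ + ‖A t (Z t)‖ := norm_add_le _ _
            _ ≤ bG + κ * ‖Z t‖ := by
                refine add_le_add (hGdb t ht) ?_
                calc ‖A t (Z t)‖ ≤ ‖A t‖ * ‖Z t‖ := (A t).le_opNorm _
                  _ ≤ κ * ‖Z t‖ := mul_le_mul_of_nonneg_right (hκ t ht) (norm_nonneg _)
        have hZt := hZle t ht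
        calc ‖Zd t‖ * (1 - κ * δ) ≤ (bG + κ * ‖Z t‖) * (1 - κ * δ) :=
              mul_le_mul_of_nonneg_right hZdle hpos.le
          _ = bG * (1 - κ * δ) + κ * (‖Z t‖ * (1 - κ * δ)) := by ring
          _ ≤ bG * (1 - κ * δ) + κ * bG :=
              add_le_add le_rfl (mul_le_mul_of_nonneg_left hZt hκ0)
          _ = (1 - κ * δ + κ) * bG := by ring
    · -- uniqueness
      intro W Wd W' Wd' hW hW' hWeq hW'eq t ht
      have key : ∀ (V Vd : ℝ → E), IsC1OnIcc t0 δ V Vd →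
          (∀ u ∈ s, V u - ∫ τ in t0..u, A τ (V τ) = G u) →
          ∀ u (hu : u ∈ s), V u = fp ⟨u, hu⟩ := by
        intro V Vd hV hVeq u hu
        set fV : C(s, E) := ⟨s.restrict V,
          continuousOn_iff_continuous_restrict.1 (hcontOf V Vd hV)⟩ with hfVdef
        have hfVfix : Function.IsFixedPt Φ fV := by
          apply ContinuousMap.ext
          intro x
          rw [hΦapp]
          have hIcong : (∫ τ in t0..x.1, Ae τ (Set.IccExtend hab (⇑fV) τ)) =
              ∫ τ in t0..x.1, A τ (V τ) := by
            apply intervalIntegral.integral_congr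
            intro τ hτ
            have hτs : τ ∈ s := huIcc x.1 x.2 hτ
            show Ae τ (Set.IccExtend hab (⇑fV) τ) = A τ (V τ)
            rw [hAeq τ hτs, Set.IccExtend_of_mem hab _ hτs]
            rfl
          rw [hIcong]
          have := hVeq x.1 x.2
          have hfVx : fV x = V x.1 := rfl
          rw [hfVx]
          rw [← this]; abel
        have : fV = fp := hcontr.fixedPoint_unique hfVfix
        calc V u = fV ⟨u, hu⟩ := rfl
          _ = fp ⟨u, hu⟩ := by rw [this]
      rw [key W Wd hW hWeq t ht, key W' Wd' hW' hW'eq t ht]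
end

section
/- Nilpotent nc sets are closed under block upper triangular matrices, with additive rank bound. Let M be a module over a unital commutative ring R, s ∈ ℕ, and Y⁰ ∈ M^{s×s}. If X ∈ Nilp(M, Y⁰; sn, κ₁), X′ ∈ Nilp(M, Y⁰; sm, κ₂), and Z ∈ M^{sn×sm} is arbitrary, then the block matrix [[X, Z],[0, X′]] belongs to Nilp(M, Y⁰; s(n+m), κ₁+κ₂). In particular, Nilp(M, Y⁰) is a nc set closed under forming block upper triangular matrices with arbitrary off-diagonal block (hence right admissible). -/
/-! ## Core definitions for free noncommutative (nc) functions in the nilpotent setting.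

Matrices at "level m over the base size s" are represented as m×m matrices whose
entries are s×s matrices over the module (i.e. sm×sm matrices in block form). -/

section NCNilpCore

variable (R : Type*) [CommRing R]

/-- Right action of a scalar `s×s` block on an `s×s` block over a module:
`(A · S) a b = ∑ c, S c b • A a c`. -/
def smallMR {M : Type*} [AddCommMonoid M] [Module R M] {s : ℕ}
    (A : Matrix (Fin s) (Fin s) M) (S : Matrix (Fin s) (Fin s) R) :
    Matrix (Fin s) (Fin s) M :=
  Matrix.of fun a b => ∑ c, S c b • A a c

/-- Left action of a scalar `s×s` block on an `s×s` block over a module: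
`(S · A) a b = ∑ c, S a c • A c b`. -/
def smallRM {M : Type*} [AddCommMonoid M] [Module R M] {s : ℕ}
    (S : Matrix (Fin s) (Fin s) R) (A : Matrix (Fin s) (Fin s) M) :
    Matrix (Fin s) (Fin s) M :=
  Matrix.of fun a b => ∑ c, S a c • A c b

/-- The product `X · T` of an `n×n` block matrix over `M^{s×s}` with an `n×m`
block scalar matrix `T` over `R^{s×s}`. -/
def bSmulR {M : Type*} [AddCommMonoid M] [Module R M] {s n m : ℕ}
    (X : Matrix (Fin n) (Fin n) (Matrix (Fin s) (Fin s) M))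
    (T : Matrix (Fin n) (Fin m) (Matrix (Fin s) (Fin s) R)) :
    Matrix (Fin n) (Fin m) (Matrix (Fin s) (Fin s) M) :=
  Matrix.of fun p q => ∑ k, smallMR R (X p k) (T k q)

/-- The product `T · Y` of an `n×m` block scalar matrix `T` over `R^{s×s}` with an
`m×m` block matrix over `M^{s×s}`. -/
def bSmulL {M : Type*} [AddCommMonoid M] [Module R M] {s n m : ℕ}
    (T : Matrix (Fin n) (Fin m) (Matrix (Fin s) (Fin s) R))
    (Y : Matrix (Fin m) (Fin m) (Matrix (Fin s) (Fin s) M)) :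
    Matrix (Fin n) (Fin m) (Matrix (Fin s) (Fin s) M) :=
  Matrix.of fun p q => ∑ k, smallRM R (T p k) (Y k q)

end NCNilpCore

/-- The `m`-fold block-diagonal amplification `Y^{(m)}` of `Y ∈ M^{s×s}`, in block form. -/
def diagAmp {V : Type*} [Zero V] {s : ℕ} (Y : Matrix (Fin s) (Fin s) V) (m : ℕ) :
    Matrix (Fin m) (Fin m) (Matrix (Fin s) (Fin s) V) :=
  Matrix.of fun p q => if p = q then Y else 0

/-- The block upper triangular matrix `[[X, Z], [0, X']]`. -/
def upperTri {V : Type*} [Zero V] {a b : ℕ} (X : Matrix (Fin a) (Fin a) V)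
    (Z : Matrix (Fin a) (Fin b) V) (X' : Matrix (Fin b) (Fin b) V) :
    Matrix (Fin (a + b)) (Fin (a + b)) V :=
  Matrix.reindex finSumFinEquiv finSumFinEquiv (Matrix.fromBlocks X Z 0 X')

section NCNilpCore2

variable (R : Type*) [CommRing R]

/-- Map a matrix over a module entrywise into the tensor algebra; products of such
matrices realize the `⊙_s` products with tensor-product entry multiplication. -/
noncomputable def matTA {V : Type*} [AddCommGroup V] [Module R V] {n m : ℕ}
    (X : Matrix (Fin n) (Fin m) V) : Matrix (Fin n) (Fin m) (TensorAlgebra R V) :=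
  X.map (TensorAlgebra.ι R)

/-- `X ∈ Nilp(M, Y0; sm, κ)` : `X` (an `m×m` block matrix over `M^{s×s}`) is nilpotent
about `Y0` of rank at most `κ`, i.e. `(X - Y0^{(m)})^{⊙_s ℓ} = 0` for all `ℓ ≥ κ`. -/
noncomputable def IsNilpAbout {M : Type*} [AddCommGroup M] [Module R M] {s m : ℕ}
    (Y0 : Matrix (Fin s) (Fin s) M) (κ : ℕ)
    (X : Matrix (Fin m) (Fin m) (Matrix (Fin s) (Fin s) M)) : Prop :=
  ∀ ℓ, κ ≤ ℓ → (matTA R (X - diagAmp Y0 m)) ^ ℓ = 0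

/-- The nc set `Nilp(M, X0)` of all matrices (over all levels) nilpotent about `X0`
of some finite rank. -/
noncomputable def NilpSet {M : Type*} [AddCommGroup M] [Module R M] {s : ℕ}
    (X0 : Matrix (Fin s) (Fin s) M) :
    ∀ m : ℕ, Set (Matrix (Fin m) (Fin m) (Matrix (Fin s) (Fin s) M)) :=
  fun _ => {X | ∃ κ, IsNilpAbout R X0 κ X}

/-- The letters (factors) of a word in `X - X0^{(m)}` and `Y - Y0^{(m)}`, with entries in
the tensor algebra of `M^{s×s} × N^{s×s}`. -/
noncomputable def jword {M N : Type*} [AddCommGroup M] [Module R M]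
    [AddCommGroup N] [Module R N] {s m : ℕ}
    (X0 : Matrix (Fin s) (Fin s) M) (Y0 : Matrix (Fin s) (Fin s) N)
    (X : Matrix (Fin m) (Fin m) (Matrix (Fin s) (Fin s) M))
    (Y : Matrix (Fin m) (Fin m) (Matrix (Fin s) (Fin s) N)) :
    Bool → Matrix (Fin m) (Fin m)
      (TensorAlgebra R (Matrix (Fin s) (Fin s) M × Matrix (Fin s) (Fin s) N))
  | true => (X - diagAmp X0 m).map fun a => TensorAlgebra.ι R (a, 0)
  | false => (Y - diagAmp Y0 m).map fun b => TensorAlgebra.ι R (0, b)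

/-- `(X, Y) ∈ Nilp(M × N, (X0, Y0); sm, κ)` : every `⊙_s`-product of `ℓ ≥ κ` factors,
each factor being `X - X0^{(m)}` or `Y - Y0^{(m)}`, vanishes. -/
noncomputable def IsJointNilp {M N : Type*} [AddCommGroup M] [Module R M]
    [AddCommGroup N] [Module R N] {s m : ℕ}
    (X0 : Matrix (Fin s) (Fin s) M) (Y0 : Matrix (Fin s) (Fin s) N) (κ : ℕ)
    (X : Matrix (Fin m) (Fin m) (Matrix (Fin s) (Fin s) M))
    (Y : Matrix (Fin m) (Fin m) (Matrix (Fin s) (Fin s) N)) : Prop :=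
  ∀ ℓ, κ ≤ ℓ → ∀ w : Fin ℓ → Bool,
    (List.ofFn fun i => jword R X0 Y0 X Y (w i)).prod = 0

/-- The nc set `Nilp(M × N, (X0, Y0))` of jointly nilpotent pairs. -/
noncomputable def JointNilpSet {M N : Type*} [AddCommGroup M] [Module R M]
    [AddCommGroup N] [Module R N] {s : ℕ}
    (X0 : Matrix (Fin s) (Fin s) M) (Y0 : Matrix (Fin s) (Fin s) N) :
    ∀ m : ℕ, Set (Matrix (Fin m) (Fin m) (Matrix (Fin s) (Fin s) M) ×
                  Matrix (Fin m) (Fin m) (Matrix (Fin s) (Fin s) N)) :=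
  fun _ => {P | ∃ κ, IsJointNilp R X0 Y0 κ P.1 P.2}

end NCNilpCore2

/-- The right nc difference-differential operator: `Δ_R f (X, X')(Z)` is the `(1,2)`
block of `f([[X, Z],[0, X']])`. -/
def DeltaR {V W : Type*} [Zero V]
    (f : ∀ m : ℕ, Matrix (Fin m) (Fin m) V → Matrix (Fin m) (Fin m) W)
    {a b : ℕ} (X : Matrix (Fin a) (Fin a) V) (X' : Matrix (Fin b) (Fin b) V)
    (Z : Matrix (Fin a) (Fin b) V) : Matrix (Fin a) (Fin b) W :=
  Matrix.of fun i j =>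
    f (a + b) (upperTri X Z X') (finSumFinEquiv (Sum.inl i)) (finSumFinEquiv (Sum.inr j))

/-- `Δ_R F` for a nc function of a pair of arguments. -/
def DeltaRP {V1 V2 W : Type*} [Zero V1] [Zero V2]
    (F : ∀ m : ℕ, Matrix (Fin m) (Fin m) V1 × Matrix (Fin m) (Fin m) V2 →
      Matrix (Fin m) (Fin m) W)
    {a b : ℕ} (P : Matrix (Fin a) (Fin a) V1 × Matrix (Fin a) (Fin a) V2)
    (Q : Matrix (Fin b) (Fin b) V1 × Matrix (Fin b) (Fin b) V2)
    (Z : Matrix (Fin a) (Fin b) V1 × Matrix (Fin a) (Fin b) V2) :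
    Matrix (Fin a) (Fin b) W :=
  Matrix.of fun i j =>
    F (a + b) (upperTri P.1 Z.1 Q.1, upperTri P.2 Z.2 Q.2)
      (finSumFinEquiv (Sum.inl i)) (finSumFinEquiv (Sum.inr j))

/-- The partial nc difference-differential operator in the first argument. -/
def DeltaRPX {V1 V2 W : Type*} [Zero V1] [Zero V2]
    (F : ∀ m : ℕ, Matrix (Fin m) (Fin m) V1 × Matrix (Fin m) (Fin m) V2 →
      Matrix (Fin m) (Fin m) W)
    {a b : ℕ} (P : Matrix (Fin a) (Fin a) V1 × Matrix (Fin a) (Fin a) V2)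
    (Q : Matrix (Fin b) (Fin b) V1 × Matrix (Fin b) (Fin b) V2)
    (Z : Matrix (Fin a) (Fin b) V1) : Matrix (Fin a) (Fin b) W :=
  DeltaRP F P Q (Z, 0)

/-- The partial nc difference-differential operator in the second argument. -/
def DeltaRPY {V1 V2 W : Type*} [Zero V1] [Zero V2]
    (F : ∀ m : ℕ, Matrix (Fin m) (Fin m) V1 × Matrix (Fin m) (Fin m) V2 →
      Matrix (Fin m) (Fin m) W)
    {a b : ℕ} (P : Matrix (Fin a) (Fin a) V1 × Matrix (Fin a) (Fin a) V2)
    (Q : Matrix (Fin b) (Fin b) V1 × Matrix (Fin b) (Fin b) V2)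
    (Z : Matrix (Fin a) (Fin b) V2) : Matrix (Fin a) (Fin b) W :=
  DeltaRP F P Q (0, Z)

section NCFun

variable (R : Type*) [CommRing R]

/-- A nc function on a nc set `Ω` (in block form, base size `s`): it respects
intertwinings by scalar block matrices. -/
def IsNCFunOn {M N : Type*} [AddCommMonoid M] [Module R M] [AddCommMonoid N] [Module R N]
    {s : ℕ} (Ω : ∀ m : ℕ, Set (Matrix (Fin m) (Fin m) (Matrix (Fin s) (Fin s) M)))
    (f : ∀ m : ℕ, Matrix (Fin m) (Fin m) (Matrix (Fin s) (Fin s) M) →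
      Matrix (Fin m) (Fin m) (Matrix (Fin s) (Fin s) N)) : Prop :=
  ∀ (n m : ℕ) (X : Matrix (Fin n) (Fin n) (Matrix (Fin s) (Fin s) M))
    (Y : Matrix (Fin m) (Fin m) (Matrix (Fin s) (Fin s) M))
    (T : Matrix (Fin n) (Fin m) (Matrix (Fin s) (Fin s) R)),
    X ∈ Ω n → Y ∈ Ω m → bSmulR R X T = bSmulL R T Y →
    bSmulR R (f n X) T = bSmulL R T (f m Y)

/-- A nc function of a pair of arguments on a nc set `Ω` of pairs. -/
def IsNCFunOnP {M1 M2 N : Type*} [AddCommMonoid M1] [Module R M1]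
    [AddCommMonoid M2] [Module R M2] [AddCommMonoid N] [Module R N]
    {s : ℕ} (Ω : ∀ m : ℕ, Set (Matrix (Fin m) (Fin m) (Matrix (Fin s) (Fin s) M1) ×
      Matrix (Fin m) (Fin m) (Matrix (Fin s) (Fin s) M2)))
    (F : ∀ m : ℕ, Matrix (Fin m) (Fin m) (Matrix (Fin s) (Fin s) M1) ×
      Matrix (Fin m) (Fin m) (Matrix (Fin s) (Fin s) M2) →
      Matrix (Fin m) (Fin m) (Matrix (Fin s) (Fin s) N)) : Prop :=
  ∀ (n m : ℕ) (P : Matrix (Fin n) (Fin n) (Matrix (Fin s) (Fin s) M1) ×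
      Matrix (Fin n) (Fin n) (Matrix (Fin s) (Fin s) M2))
    (Q : Matrix (Fin m) (Fin m) (Matrix (Fin s) (Fin s) M1) ×
      Matrix (Fin m) (Fin m) (Matrix (Fin s) (Fin s) M2))
    (T : Matrix (Fin n) (Fin m) (Matrix (Fin s) (Fin s) R)),
    P ∈ Ω n → Q ∈ Ω m →
    bSmulR R P.1 T = bSmulL R T Q.1 → bSmulR R P.2 T = bSmulL R T Q.2 →
    bSmulR R (F n P) T = bSmulL R T (F m Q)

end NCFun


lemma pow_fromBlocks_upper {S : Type*} [Ring S] {n m : Type*} [Fintype n] [Fintype m]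
    [DecidableEq n] [DecidableEq m]
    (A : Matrix n n S) (B : Matrix n m S) (D : Matrix m m S) (ℓ : ℕ) :
    (Matrix.fromBlocks A B 0 D) ^ ℓ =
      Matrix.fromBlocks (A ^ ℓ)
        (∑ i ∈ Finset.range ℓ, A ^ i * B * D ^ (ℓ - 1 - i)) 0 (D ^ ℓ) := by
  induction ℓ with
  | zero => simp [Matrix.fromBlocks_one]
  | succ ℓ ih =>
      rw [pow_succ, ih, Matrix.fromBlocks_multiply]
      have hB : A ^ ℓ * B + (∑ i ∈ Finset.range ℓ, A ^ i * B * D ^ (ℓ - 1 - i)) * D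
          = ∑ i ∈ Finset.range (ℓ + 1), A ^ i * B * D ^ (ℓ + 1 - 1 - i) := by
        rw [Matrix.sum_mul, Finset.sum_range_succ, add_comm]
        congr 1
        · apply Finset.sum_congr rfl
          intro i hi
          rw [Finset.mem_range] at hi
          rw [Matrix.mul_assoc, ← pow_succ]
          congr 2
          omega
        · simp
      rw [hB]
      simp [← pow_succ]

lemma matTA_upperTri_sub
    {R : Type*} [CommRing R] {M : Type*} [AddCommGroup M] [Module R M]
    {s : ℕ} (Y0 : Matrix (Fin s) (Fin s) M) (n m : ℕ)
    (X : Matrix (Fin n) (Fin n) (Matrix (Fin s) (Fin s) M))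
    (X' : Matrix (Fin m) (Fin m) (Matrix (Fin s) (Fin s) M))
    (Z : Matrix (Fin n) (Fin m) (Matrix (Fin s) (Fin s) M)) :
    matTA R (upperTri X Z X' - diagAmp Y0 (n + m)) =
      Matrix.reindexAlgEquiv R _ finSumFinEquiv
        (Matrix.fromBlocks (matTA R (X - diagAmp Y0 n)) (matTA R Z) 0
          (matTA R (X' - diagAmp Y0 m))) := by
  set e := finSumFinEquiv (m := n) (n := m)
  ext i j
  obtain ⟨p, rfl⟩ := e.surjective i
  obtain ⟨q, rfl⟩ := e.surjective j
  have hpq : (e p = e q) ↔ p = q := e.injective.eq_iff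
  rcases p with p | p <;> rcases q with q | q <;>
    simp only [matTA, upperTri, diagAmp, Matrix.reindexAlgEquiv_apply,
      Matrix.reindex_apply, Matrix.submatrix_apply, Matrix.map_apply, Matrix.sub_apply,
      Matrix.of_apply, Equiv.symm_apply_apply, Matrix.fromBlocks_apply₁₁,
      Matrix.fromBlocks_apply₁₂, Matrix.fromBlocks_apply₂₁, Matrix.fromBlocks_apply₂₂,
      hpq, Sum.inl.injEq, Sum.inr.injEq] <;>
    simp_all [e]

theorem nilpAbout_upperTri'
    {R : Type*} [CommRing R] {M : Type*} [AddCommGroup M] [Module R M]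
    {s : ℕ} (Y0 : Matrix (Fin s) (Fin s) M)
    (n m κ₁ κ₂ : ℕ)
    (X : Matrix (Fin n) (Fin n) (Matrix (Fin s) (Fin s) M))
    (X' : Matrix (Fin m) (Fin m) (Matrix (Fin s) (Fin s) M))
    (Z : Matrix (Fin n) (Fin m) (Matrix (Fin s) (Fin s) M))
    (hX : IsNilpAbout R Y0 κ₁ X) (hX' : IsNilpAbout R Y0 κ₂ X') :
    IsNilpAbout R Y0 (κ₁ + κ₂) (upperTri X Z X') := by
  intro ℓ hℓ
  rw [matTA_upperTri_sub, ← map_pow, pow_fromBlocks_upper]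
  have h1 : (matTA R (X - diagAmp Y0 n)) ^ ℓ = 0 := hX ℓ (by omega)
  have h2 : (matTA R (X' - diagAmp Y0 m)) ^ ℓ = 0 := hX' ℓ (by omega)
  have h3 : ∑ i ∈ Finset.range ℓ, (matTA R (X - diagAmp Y0 n)) ^ i * matTA R Z *
      (matTA R (X' - diagAmp Y0 m)) ^ (ℓ - 1 - i) = 0 := by
    apply Finset.sum_eq_zero
    intro i hi
    rw [Finset.mem_range] at hi
    by_cases h : κ₁ ≤ i
    · rw [hX i h, Matrix.zero_mul, Matrix.zero_mul]
    · rw [hX' (ℓ - 1 - i) (by omega), Matrix.mul_zero]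
  rw [h1, h2, h3, Matrix.fromBlocks_zero, map_zero]

/-- **Nilpotent nc sets are closed under block upper triangular matrices, with
additive rank bound.** In particular `Nilp(M, Y0)` is a nc set closed under forming
block upper triangular matrices with arbitrary off-diagonal block. -/
theorem nilpAbout_upperTri
    {R : Type*} [CommRing R] {M : Type*} [AddCommGroup M] [Module R M]
    {s : ℕ} (hs : 0 < s) (Y0 : Matrix (Fin s) (Fin s) M)
    (n m κ₁ κ₂ : ℕ) (hn : 0 < n) (hm : 0 < m) (hκ₁ : 1 ≤ κ₁) (hκ₂ : 1 ≤ κ₂)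
    (X : Matrix (Fin n) (Fin n) (Matrix (Fin s) (Fin s) M))
    (X' : Matrix (Fin m) (Fin m) (Matrix (Fin s) (Fin s) M))
    (Z : Matrix (Fin n) (Fin m) (Matrix (Fin s) (Fin s) M))
    (hX : IsNilpAbout R Y0 κ₁ X) (hX' : IsNilpAbout R Y0 κ₂ X') :
    IsNilpAbout R Y0 (κ₁ + κ₂) (upperTri X Z X') ∧
    upperTri X Z X' ∈ NilpSet R Y0 (n + m) := by
  constructor
  · exact nilpAbout_upperTri' Y0 n m κ₁ κ₂ X X' Z hX hX'
  · exact ⟨κ₁ + κ₂, nilpAbout_upperTri' Y0 n m κ₁ κ₂ X X' Z hX hX'⟩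
end
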